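/- Let f be convex on [0,1], let [l,r] ⊆ [0,1] with width w = r - l, and set x_l = l + w/4, x_c = l + w/2, x_r = l + 3w/4. Suppose the minimizer x* of f over [0,1] lies in [l,r], and suppose |f(u) - f(v)| ≤ 3γ for all u, v ∈ {x_l, x_c, x_r}. Then f(x) ≤ f(x*) + 12γ for each x ∈ {x_l, x_c, x_r}. -/

import Mathlib

theorem stmt_1 (f : ℝ → ℝ) (hf : ConvexOn ℝ (Set.Icc (0:ℝ) 1) f)
    (l r γ xstar : ℝ) (hl : 0 ≤ l) (hlr : l < r) (hr : r ≤ 1) (hγ : 0 < γ)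
    (xl xc xr : ℝ)
    (hxl : xl = l + (r - l)/4) (hxc : xc = l + (r - l)/2) (hxr : xr = l + 3*(r - l)/4)
    (hxstar : xstar ∈ Set.Icc l r)
    (hmin : ∀ y ∈ Set.Icc (0:ℝ) 1, f xstar ≤ f y)
    (hflat : ∀ u ∈ ({xl, xc, xr} : Set ℝ), ∀ v ∈ ({xl, xc, xr} : Set ℝ),
      |f u - f v| ≤ 3*γ) :
    ∀ x ∈ ({xl, xc, xr} : Set ℝ), f x ≤ f xstar + 12*γ := by
  subst hxl hxc hxr
  intro x hx
  obtain ⟨hsl, hsr⟩ := hxstar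
  have hmemL : l + (r-l)/4 ∈ Set.Icc (0:ℝ) 1 := ⟨by linarith, by linarith⟩
  have hmemR : l + 3*(r-l)/4 ∈ Set.Icc (0:ℝ) 1 := ⟨by linarith, by linarith⟩
  have hmemS : xstar ∈ Set.Icc (0:ℝ) 1 := ⟨by linarith, by linarith⟩
  have hCmem : l + (r-l)/2 ∈ ({l+(r-l)/4, l+(r-l)/2, l+3*(r-l)/4} : Set ℝ) := by simp
  have hLmem : l + (r-l)/4 ∈ ({l+(r-l)/4, l+(r-l)/2, l+3*(r-l)/4} : Set ℝ) := by simp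
  have hRmem : l + 3*(r-l)/4 ∈ ({l+(r-l)/4, l+(r-l)/2, l+3*(r-l)/4} : Set ℝ) := by simp
  rcases le_or_gt xstar (l + (r-l)/2) with hcase | hcase
  · -- xstar ≤ center: use xr
    set a : ℝ := ((r-l)/4) / (l + 3*(r-l)/4 - xstar) with ha
    have hdpos : 0 < l + 3*(r-l)/4 - xstar := by linarith
    have ha0 : 0 ≤ a := div_nonneg (by linarith) hdpos.le
    have ha1 : a ≤ 1 := by
      rw [ha, div_le_one hdpos]; linarith
    have ha3 : 1/3 ≤ a := by
      rw [ha, le_div_iff₀ hdpos]; linarith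
    have hmul : a * (l + 3*(r-l)/4 - xstar) = (r-l)/4 :=
      div_mul_cancel₀ _ hdpos.ne'
    have key : f (l+(r-l)/2) ≤ a * f xstar + (1-a) * f (l+3*(r-l)/4) := by
      have h := hf.2 hmemS hmemR ha0 (by linarith : (0:ℝ) ≤ 1 - a) (by ring)
      have heq : a • xstar + (1-a) • (l+3*(r-l)/4) = l+(r-l)/2 := by
        simp only [smul_eq_mul]; linear_combination (-1 : ℝ) * hmul
      rw [heq] at h; simpa using h
    have h1 : -(3*γ) ≤ f (l+(r-l)/2) - f (l+3*(r-l)/4) := by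
      have := abs_le.mp (hflat _ hCmem _ hRmem); linarith [this.1]
    have hD : -(9*γ) ≤ f xstar - f (l+3*(r-l)/4) := by
      nlinarith [key, h1, ha3, ha1, ha0]
    have h2 : f x - f (l+3*(r-l)/4) ≤ 3*γ := by
      have := abs_le.mp (hflat _ hx _ hRmem); linarith [this.2]
    linarith
  · -- xstar > center: use xl
    set a : ℝ := ((r-l)/4) / (xstar - (l + (r-l)/4)) with ha
    have hdpos : 0 < xstar - (l + (r-l)/4) := by linarith
    have ha0 : 0 ≤ a := div_nonneg (by linarith) hdpos.le
    have ha1 : a ≤ 1 := by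
      rw [ha, div_le_one hdpos]; linarith
    have ha3 : 1/3 ≤ a := by
      rw [ha, le_div_iff₀ hdpos]; linarith
    have hmul : a * (xstar - (l + (r-l)/4)) = (r-l)/4 :=
      div_mul_cancel₀ _ hdpos.ne'
    have key : f (l+(r-l)/2) ≤ (1-a) * f (l+(r-l)/4) + a * f xstar := by
      have h := hf.2 hmemL hmemS (by linarith : (0:ℝ) ≤ 1 - a) ha0 (by ring)
      have heq : (1-a) • (l+(r-l)/4) + a • xstar = l+(r-l)/2 := by
        simp only [smul_eq_mul]; linear_combination hmul
      rw [heq] at h; simpa using h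
    have h1 : -(3*γ) ≤ f (l+(r-l)/2) - f (l+(r-l)/4) := by
      have := abs_le.mp (hflat _ hCmem _ hLmem); linarith [this.1]
    have hD : -(9*γ) ≤ f xstar - f (l+(r-l)/4) := by
      nlinarith [key, h1, ha3, ha1, ha0]
    have h2 : f x - f (l+(r-l)/4) ≤ 3*γ := by
      have := abs_le.mp (hflat _ hx _ hLmem); linarith [this.2]
    linarith
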